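/- There exists a parameter c ∈ (3.85, 4) such that, writing g_c = f_c³ (the third iterate of the quadratic map f_c), one has g_c(1/2) ≠ g_c²(1/2) and g_c²(1/2) = g_c³(1/2). -/

import Mathlib

open MeasureTheory Set Filter Topology ENNReal NNReal

/-- The quadratic (logistic) map `f_a(x) = a·x·(1−x)`. -/
noncomputable def fa (a x : ℝ) : ℝ := a * x * (1 - x)

/-- The Birkhoff average of Dirac measures along the orbit of `x`:
`ν_a^n(x) = (1/n)·Σ_{k=0}^{n−1} δ_{f_a^k(x)}`. -/
noncomputable def birkhoff (a : ℝ) (n : ℕ) (x : ℝ) : Measure ℝ :=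
  (n : ℝ≥0∞)⁻¹ • ∑ k ∈ Finset.range n, Measure.dirac ((fa a)^[k] x)

/-- Weak convergence of a sequence of (finite Borel) measures on `ℝ`. -/
def WeakLim (μs : ℕ → Measure ℝ) (μ : Measure ℝ) : Prop :=
  ∀ g : BoundedContinuousFunction ℝ ℝ,
    Tendsto (fun n => ∫ x, g x ∂ (μs n)) atTop (𝓝 (∫ x, g x ∂ μ))

/-- The basin of a measure `μ` for the map `f_a`. -/
def basin (a : ℝ) (μ : Measure ℝ) : Set ℝ :=
  {x | x ∈ Icc (0:ℝ) 1 ∧ WeakLim (fun n => birkhoff a n x) μ}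

/-- `μ` is a physical measure of `f_a`: a Borel probability measure on `[0,1]` whose
basin has positive Lebesgue measure. -/
def IsPhysicalMeasure (a : ℝ) (μ : Measure ℝ) : Prop :=
  IsProbabilityMeasure μ ∧ μ (Icc (0:ℝ) 1) = 1 ∧ 0 < volume (basin a μ)

/-- A computable real number. -/
def ComputableReal (x : ℝ) : Prop :=
  ∃ q : ℕ → ℚ, Computable q ∧ ∀ n : ℕ, |(q n : ℝ) - x| < 2 ^ (-(n:ℤ))

/-- The continuous piecewise linear function determined by a list of
(rational) breakpoints and values. -/
noncomputable def pwlFun : List (ℚ × ℚ) → ℝ → ℝ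
  | [], _ => 0
  | [(_, v)], _ => (v : ℝ)
  | (q₁, v₁) :: (q₂, v₂) :: L, x =>
    if x ≤ (q₁ : ℝ) then (v₁ : ℝ)
    else if x ≤ (q₂ : ℝ) then
      (v₁ : ℝ) + (x - (q₁ : ℝ)) * ((v₂ : ℝ) - (v₁ : ℝ)) / ((q₂ : ℝ) - (q₁ : ℝ))
    else pwlFun ((q₂, v₂) :: L) x

/-- A computable Borel probability measure on `[0,1]`: the integrals of the (canonically
encoded) continuous piecewise linear functions with rational breakpoints and values can be
uniformly approximated by an algorithm. -/
def ComputableMeasure (μ : Measure ℝ) : Prop :=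
  ∃ M : List (ℚ × ℚ) → ℕ → ℚ, Computable₂ M ∧
    ∀ L : List (ℚ × ℚ), L.Chain' (fun p q => p.1 < q.1) →
      ∀ k : ℕ, |(M L k : ℝ) - ∫ x, pwlFun L x ∂μ| < 2 ^ (-(k:ℤ))

/-- The third iterate `g_a = f_a³`. -/
noncomputable def ga (a : ℝ) : ℝ → ℝ := (fa a)^[3]

/-- There exists `c ∈ (3.85, 4)` such that, writing `g_c = f_c³`,
one has `g_c(1/2) ≠ g_c²(1/2)` and `g_c²(1/2) = g_c³(1/2)`. -/
theorem stmt3 :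
    ∃ c : ℝ, c ∈ Ioo (3.85 : ℝ) 4 ∧
      ga c (1/2) ≠ ga c (ga c (1/2)) ∧
      ga c (ga c (1/2)) = ga c (ga c (ga c (1/2))) := by
  -- Find `c ∈ (3.876, 3.88)` with `c * f_c^[5] (1/2) = 1` by the IVT.
  have hcont : ContinuousOn (fun a : ℝ => a * (fa a)^[5] (1/2) - 1) (Icc 3.876 3.88) := by
    apply Continuous.continuousOn
    simp only [Function.iterate_succ, Function.iterate_zero, Function.comp_apply, id_eq, fa]
    fun_prop
  have hIVT := intermediate_value_Ioo (by norm_num : (3.876:ℝ) ≤ 3.88) hcont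
  have h0 : (0:ℝ) ∈ Ioo ((fun a : ℝ => a * (fa a)^[5] (1/2) - 1) 3.876)
      ((fun a : ℝ => a * (fa a)^[5] (1/2) - 1) 3.88) := by
    simp only [Function.iterate_succ, Function.iterate_zero, Function.comp_apply, id_eq, fa]
    norm_num
  obtain ⟨c, hc, hFc⟩ := hIVT h0
  have hFc' : c * (fa c)^[5] (1/2) - 1 = 0 := hFc
  have hc1 : (3.876:ℝ) < c := hc.1
  have hc2 : c < (3.88:ℝ) := hc.2
  have hcpos : (0:ℝ) < c := by linarith
  have hcne : c ≠ 0 := ne_of_gt hcpos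
  -- `f^[5] (1/2) = 1/c`
  have h5 : (fa c)^[5] (1/2) = 1 / c := by
    rw [eq_div_iff hcne]; linarith
  -- the fixed point `p = 1 - 1/c`
  set p : ℝ := 1 - 1 / c with hp
  have hfix : fa c p = p := by
    simp only [hp, fa]; field_simp; ring
  have h6 : (fa c)^[6] (1/2) = p := by
    rw [show (6:ℕ) = 5 + 1 from rfl, Function.iterate_succ_apply', h5]
    simp only [fa, hp]; field_simp
  have hiterp : ∀ n : ℕ, (fa c)^[n] p = p := by
    intro n; induction n with
    | zero => rfl
    | succ k ih => rw [Function.iterate_succ_apply', ih, hfix]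
  -- `ga` compositions
  have hga2 : ga c (ga c (1/2)) = p := by
    show (fa c)^[3] ((fa c)^[3] (1/2)) = p
    rw [← Function.iterate_add_apply]; exact h6
  have hga3 : ga c (ga c (ga c (1/2))) = p := by
    rw [hga2]; exact hiterp 3
  refine ⟨c, ⟨by norm_num at hc1 ⊢; linarith, by norm_num at hc2 ⊢; linarith⟩, ?_, ?_⟩
  · intro h
    rw [hga2] at h
    have h3 : (fa c)^[3] (1/2) = p := h
    have h5p : (fa c)^[5] (1/2) = p := by
      have e : (fa c)^[5] (1/2) = (fa c)^[2] ((fa c)^[3] (1/2)) := by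
        rw [← Function.iterate_add_apply]
      rw [e, h3]; exact hiterp 2
    rw [h5, hp] at h5p
    have : c = 2 := by field_simp at h5p; linarith
    linarith
  · exact hga2.trans hga3.symm
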